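/- Let n ≥ 1 and let p, q : {0,1}^n → [0,1] be probability mass functions (Σ_v p(v) = Σ_w q(w) = 1). Let H(p) = −Σ_v p(v) log p(v) and H(q) = −Σ_w q(w) log q(w) (with 0·log 0 = 0), and let E = Σ_{v,w ∈ {0,1}^n} p(v) q(w) d(v,w) be the expected Hamming distance between independent samples from p and q. Then n·( h⁻¹(H(p)/n) * h⁻¹(H(q)/n) ) ≤ E ≤ n·( 1 − h⁻¹(H(p)/n) * h⁻¹(H(q)/n) ). -/

import Mathlib

open Finset Asymptotics Filter

/-- Binary entropy function (base-2 logarithms). -/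
noncomputable def binEnt (p : ℝ) : ℝ :=
  -(p * Real.logb 2 p) - (1 - p) * Real.logb 2 (1 - p)

/-- Inverse of the binary entropy function restricted to `[0, 1/2]`. -/
noncomputable def binEntInv (x : ℝ) : ℝ :=
  sSup {p : ℝ | p ∈ Set.Icc (0:ℝ) (1/2) ∧ binEnt p ≤ x}

/-- `p*q = p(1-q) + q(1-p)`. -/
def pstar (p q : ℝ) : ℝ := p * (1 - q) + q * (1 - p)

/-- Probability of the rectangle `A × B` for `ρ`-correlated uniform binary strings. -/
noncomputable def Pxy (n : ℕ) (ρ : ℝ) (A B : Finset (Fin n → Bool)) : ℝ :=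
  ∑ a ∈ A, ∑ b ∈ B,
    (2:ℝ)⁻¹ ^ n * ((1 + ρ)/2) ^ n * ((1 - ρ)/(1 + ρ)) ^ (hammingDist a b)

/-- Hamming sphere of radius `j` around the all-zeros string in `{0,1}^n`. -/
def hSphere (n j : ℕ) : Finset (Fin n → Bool) :=
  Finset.univ.filter (fun x => (Finset.univ.filter (fun i => x i = true)).card = j)

/-- The exponent function `w_d(α,β)`. -/
noncomputable def wd (α β d : ℝ) : ℝ :=
  α + binEntInv α * binEnt (1/2 + (binEntInv β - d)/(2 * binEntInv α))
    + (1 - binEntInv α) * binEnt (1/2 + (d - (1 - binEntInv β))/(2 * (1 - binEntInv α)))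

/-- The noise operator `T_ρ`. -/
noncomputable def Tnoise (n : ℕ) (ρ : ℝ) (f : (Fin n → Bool) → ℝ) (y : Fin n → Bool) : ℝ :=
  ∑ x : Fin n → Bool,
    f x * ((1 + ρ)/2) ^ (n - hammingDist x y) * ((1 - ρ)/2) ^ (hammingDist x y)

/-- The normalized `p`-norm on functions on the hypercube. -/
noncomputable def pNorm (n : ℕ) (p : ℝ) (f : (Fin n → Bool) → ℝ) : ℝ :=
  ((2:ℝ)⁻¹ ^ n * ∑ x : Fin n → Bool, |f x| ^ p) ^ (1/p)

/-- Indicator function of a set `A ⊆ {0,1}^n`. -/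
def indA (n : ℕ) (A : Finset (Fin n → Bool)) : (Fin n → Bool) → ℝ :=
  fun x => if x ∈ A then 1 else 0

lemma binEnt_eq (x : ℝ) : binEnt x = Real.binEntropy x / Real.log 2 := by
  unfold binEnt Real.binEntropy Real.logb
  rw [Real.log_inv, Real.log_inv]
  ring

lemma binEnt_symm (x : ℝ) : binEnt (1 - x) = binEnt x := by
  rw [binEnt_eq, binEnt_eq, Real.binEntropy_one_sub]

lemma binEnt_zero : binEnt 0 = 0 := by simp [binEnt]

lemma binEnt_strictMonoOn : StrictMonoOn binEnt (Set.Icc (0:ℝ) (1/2)) := by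
  have h2 : (0:ℝ) < Real.log 2 := Real.log_pos one_lt_two
  intro x hx y hy hxy
  rw [binEnt_eq, binEnt_eq]
  have : (Set.Icc (0:ℝ) (1/2)) = Set.Icc 0 2⁻¹ := by norm_num
  rw [this] at hx hy
  exact div_lt_div_of_pos_right (Real.binEntropy_strictMonoOn hx hy hxy) h2

lemma binEntInv_mem {x : ℝ} (hx : 0 ≤ x) : binEntInv x ∈ Set.Icc (0:ℝ) (1/2) := by
  have h0 : (0:ℝ) ∈ {p : ℝ | p ∈ Set.Icc (0:ℝ) (1/2) ∧ binEnt p ≤ x} := by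
    refine ⟨⟨le_refl _, by norm_num⟩, by rw [binEnt_zero]; exact hx⟩
  have hbdd : BddAbove {p : ℝ | p ∈ Set.Icc (0:ℝ) (1/2) ∧ binEnt p ≤ x} :=
    ⟨1/2, fun y hy => hy.1.2⟩
  constructor
  · exact le_csSup hbdd h0
  · exact csSup_le ⟨0, h0⟩ (fun y hy => hy.1.2)

lemma binEntInv_le {x x₀ : ℝ} (hx : 0 ≤ x) (hx₀ : x₀ ∈ Set.Icc (0:ℝ) (1/2))
    (h : x ≤ binEnt x₀) : binEntInv x ≤ x₀ := by
  have h0 : (0:ℝ) ∈ {p : ℝ | p ∈ Set.Icc (0:ℝ) (1/2) ∧ binEnt p ≤ x} := by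
    refine ⟨⟨le_refl _, by norm_num⟩, by rw [binEnt_zero]; exact hx⟩
  refine csSup_le ⟨0, h0⟩ (fun y hy => ?_)
  by_contra hlt
  push_neg at hlt
  exact absurd (hy.2.trans h) (not_le.2 (binEnt_strictMonoOn hx₀ hy.1 hlt))

/-- auxiliary: `g v = log ((1+v)/2) - log ((1-v)/2)` -/
noncomputable def gAux (v : ℝ) : ℝ := Real.log ((1+v)/2) - Real.log ((1-v)/2)

lemma gAux_hasDeriv {v : ℝ} (h1 : -1 < v) (h2 : v < 1) :
    HasDerivAt gAux (1/(1+v) + 1/(1-v)) v := by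
  have ha : (0:ℝ) < 1 + v := by linarith
  have hb : (0:ℝ) < 1 - v := by linarith
  have d1 : HasDerivAt (fun v : ℝ => (1+v)/2) (1/2) v := by
    simpa using ((hasDerivAt_const v (1:ℝ)).add (hasDerivAt_id v)).div_const 2
  have d2 : HasDerivAt (fun v : ℝ => (1-v)/2) (-1/2) v := by
    simpa using ((hasDerivAt_const v (1:ℝ)).sub (hasDerivAt_id v)).div_const 2
  have l1 := d1.log (by positivity)
  have l2 := d2.log (by positivity)
  have := l1.sub l2
  refine HasDerivAt.congr_deriv this ?_
  field_simp
  ring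

lemma gAux_nonneg {v : ℝ} (h0 : 0 ≤ v) (h2 : v < 1) : 0 ≤ gAux v := by
  have hb : (0:ℝ) < 1 - v := by linarith
  have : (1-v)/2 ≤ (1+v)/2 := by linarith
  exact sub_nonneg.2 (Real.log_le_log (by positivity) this)

/-- `w v = 2v/(1-v²) - g v ≥ 0` on `[0,1)` -/
lemma gAux_le {v : ℝ} (h0 : 0 ≤ v) (h2 : v < 1) : gAux v ≤ 2*v/(1-v^2) := by
  set w : ℝ → ℝ := fun v => 2*v/(1-v^2) - gAux v with hw
  have hderiv : ∀ x ∈ Set.Ioo (-1:ℝ) 1, HasDerivAt w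
      (2*(1+x^2)/(1-x^2)^2 - (1/(1+x) + 1/(1-x))) x := by
    intro x hx
    have hden : (1:ℝ) - x^2 ≠ 0 := by nlinarith [hx.1, hx.2]
    have d1 : HasDerivAt (fun v : ℝ => 2*v/(1-v^2))
        ((2*(1-x^2) - 2*x*(-2*x))/(1-x^2)^2) x := by
      have dnum : HasDerivAt (fun v : ℝ => 2*v) 2 x := by
        simpa using (hasDerivAt_id x).const_mul (2:ℝ)
      have dden : HasDerivAt (fun v : ℝ => 1-v^2) (-2*x) x := by
        have := (hasDerivAt_pow 2 x)
        have := (hasDerivAt_const x (1:ℝ)).sub (hasDerivAt_pow 2 x)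
        exact this.congr_deriv (by norm_num)
      exact dnum.div dden hden
    have := d1.sub (gAux_hasDeriv hx.1 hx.2)
    refine HasDerivAt.congr_deriv this ?_
    field_simp
    ring
  have hmono : MonotoneOn w (Set.Ico (0:ℝ) 1) := by
    apply monotoneOn_of_deriv_nonneg (convex_Ico 0 1)
    · intro x hx
      exact (hderiv x ⟨by linarith [hx.1], hx.2⟩).continuousAt.continuousWithinAt
    · intro x hx
      rw [interior_Ico] at hx
      exact (hderiv x ⟨by linarith [hx.1], hx.2⟩).differentiableAt.differentiableWithinAt
    · intro x hx
      rw [interior_Ico] at hx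
      rw [(hderiv x ⟨by linarith [hx.1], hx.2⟩).deriv]
      have ha : (0:ℝ) < 1 + x := by linarith [hx.1]
      have hb : (0:ℝ) < 1 - x := by linarith [hx.2]
      have hd2 : (0:ℝ) < 1 - x^2 := by nlinarith
      have e1 : 1/(1+x) + 1/(1-x) = 2/(1-x^2) := by
        field_simp
        ring
      rw [e1, sub_nonneg, div_le_div_iff₀ hd2 (by positivity)]
      nlinarith
  have h00 : w 0 = 0 := by simp [hw, gAux]
  have := hmono (Set.mem_Ico.2 ⟨le_refl 0, by norm_num⟩) (Set.mem_Ico.2 ⟨h0, h2⟩) h0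
  rw [h00] at this
  simp only [hw] at this
  linarith

lemma gdiv_mono : MonotoneOn (fun v => gAux v / v) (Set.Ioo (0:ℝ) 1) := by
  have hderiv : ∀ x ∈ Set.Ioo (0:ℝ) 1, HasDerivAt (fun v => gAux v / v)
      (((1/(1+x) + 1/(1-x)) * x - gAux x * 1)/x^2) x := by
    intro x hx
    exact (gAux_hasDeriv (by linarith [hx.1]) hx.2).div (hasDerivAt_id x) (ne_of_gt hx.1)
  apply monotoneOn_of_deriv_nonneg (convex_Ioo 0 1)
  · intro x hx
    exact (hderiv x hx).continuousAt.continuousWithinAt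
  · intro x hx
    rw [interior_Ioo] at hx
    exact (hderiv x hx).differentiableAt.differentiableWithinAt
  · intro x hx
    rw [interior_Ioo] at hx
    rw [(hderiv x hx).deriv]
    have ha : (0:ℝ) < 1 + x := by linarith [hx.1]
    have hb : (0:ℝ) < 1 - x := by linarith [hx.2]
    have hd2 : (0:ℝ) < 1 - x^2 := by nlinarith [hx.1, hx.2]
    have e1 : (1/(1+x) + 1/(1-x)) * x = 2*x/(1-x^2) := by field_simp; ring
    have := gAux_le (le_of_lt hx.1) hx.2
    apply div_nonneg _ (by positivity)
    rw [e1]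
    linarith

/-- `m(u) = binEnt ((1-√u)/2)` -/
noncomputable def mFun (u : ℝ) : ℝ := binEnt ((1 - Real.sqrt u)/2)

noncomputable def mDeriv (u : ℝ) : ℝ := -(gAux (Real.sqrt u) / Real.sqrt u) / (4 * Real.log 2)

lemma mFun_hasDeriv {u : ℝ} (hu : u ∈ Set.Ioo (0:ℝ) 1) : HasDerivAt mFun (mDeriv u) u := by
  have hv0 : 0 < Real.sqrt u := Real.sqrt_pos.2 hu.1
  have hv1 : Real.sqrt u < 1 := by
    rw [show (1:ℝ) = Real.sqrt 1 by simp]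
    exact Real.sqrt_lt_sqrt (le_of_lt hu.1) hu.2
  set v := Real.sqrt u with hv
  have hsq : HasDerivAt Real.sqrt (1/(2*v)) u := Real.hasDerivAt_sqrt (ne_of_gt hu.1)
  have hinner : HasDerivAt (fun u : ℝ => (1 - Real.sqrt u)/2) (-(1/(2*v))/2) u := by
    simpa using ((hasDerivAt_const u (1:ℝ)).sub hsq).div_const 2
  set x := (1 - v)/2 with hx
  have hx0 : (0:ℝ) < x := by rw [hx]; linarith
  have hx1 : x < 1 := by rw [hx]; linarith
  have hbe : HasDerivAt binEnt ((Real.log (1-x) - Real.log x)/Real.log 2) x := by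
    have h := (Real.hasDerivAt_binEntropy (ne_of_gt hx0) (ne_of_lt hx1)).div_const (Real.log 2)
    have : binEnt = fun y => Real.binEntropy y / Real.log 2 := funext binEnt_eq
    rw [this]
    exact h
  have hcomp := hbe.comp u hinner
  refine HasDerivAt.congr_deriv hcomp ?_
  symm
  have h1x : 1 - x = (1 + v)/2 := by rw [hx]; ring
  rw [mDeriv, gAux, h1x, hx]
  have hl2 : Real.log 2 ≠ 0 := ne_of_gt (Real.log_pos one_lt_two)
  have key : ∀ G L w : ℝ, L ≠ 0 → w ≠ 0 → -(G/w)/(4*L) = G/L * (-(1/(2*w))/2) := by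
    intros G L w hL hw
    field_simp
    ring
  exact key _ _ _ hl2 (ne_of_gt hv0)

lemma mFun_concave : ConcaveOn ℝ (Set.Icc (0:ℝ) 1) mFun := by
  have hcb : Continuous binEnt := by
    have : binEnt = fun y => Real.binEntropy y / Real.log 2 := funext binEnt_eq
    rw [this]
    exact Real.binEntropy_continuous.div_const _
  apply AntitoneOn.concaveOn_of_deriv (convex_Icc 0 1)
  · exact (hcb.comp (by continuity)).continuousOn
  · rw [interior_Icc]
    intro x hx
    exact (mFun_hasDeriv hx).differentiableAt.differentiableWithinAt
  · rw [interior_Icc]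
    intro u₁ h₁ u₂ h₂ h12
    rw [(mFun_hasDeriv h₁).deriv, (mFun_hasDeriv h₂).deriv]
    have hs1 : Real.sqrt u₁ ∈ Set.Ioo (0:ℝ) 1 := by
      constructor
      · exact Real.sqrt_pos.2 h₁.1
      · rw [show (1:ℝ) = Real.sqrt 1 by simp]
        exact Real.sqrt_lt_sqrt (le_of_lt h₁.1) h₁.2
    have hs2 : Real.sqrt u₂ ∈ Set.Ioo (0:ℝ) 1 := by
      constructor
      · exact Real.sqrt_pos.2 h₂.1
      · rw [show (1:ℝ) = Real.sqrt 1 by simp]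
        exact Real.sqrt_lt_sqrt (le_of_lt h₂.1) h₂.2
    have hmono := gdiv_mono hs1 hs2 (Real.sqrt_le_sqrt h12)
    rw [mDeriv, mDeriv]
    have hl2 : (0:ℝ) < 4 * Real.log 2 := by positivity
    exact div_le_div_of_nonneg_right (neg_le_neg hmono) (le_of_lt hl2)

section prob
variable {n : ℕ}

noncomputable def margP (p : (Fin n → Bool) → ℝ) (i : Fin n) : ℝ :=
  ∑ v : Fin n → Bool, if v i then p v else 0

lemma margP_compl (p : (Fin n → Bool) → ℝ) (hps : ∑ v : Fin n → Bool, p v = 1) (i : Fin n) :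
    ∑ v : Fin n → Bool, (if v i then 0 else p v) = 1 - margP p i := by
  rw [eq_sub_iff_add_eq, margP, ← Finset.sum_add_distrib, ← hps]
  apply Finset.sum_congr rfl
  intro v _
  by_cases h : v i <;> simp [h]

lemma sum_split (p : (Fin n → Bool) → ℝ) (hps : ∑ v : Fin n → Bool, p v = 1) (i : Fin n)
    (f : Bool → ℝ) :
    ∑ v : Fin n → Bool, p v * f (v i) = margP p i * f true + (1 - margP p i) * f false := by
  have h : ∀ v : Fin n → Bool, p v * f (v i)
      = (if v i then p v else 0) * f true + (if v i then 0 else p v) * f false := by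
    intro v
    by_cases h : v i <;> simp [h]
  rw [Finset.sum_congr rfl (fun v _ => h v), Finset.sum_add_distrib,
    ← Finset.sum_mul, ← Finset.sum_mul, margP_compl p hps i]
  rfl

lemma margP_nonneg (p : (Fin n → Bool) → ℝ) (hp0 : ∀ v, 0 ≤ p v) (i : Fin n) :
    0 ≤ margP p i := by
  apply Finset.sum_nonneg
  intro v _
  by_cases h : v i <;> simp [h, hp0 v]

lemma margP_le_one (p : (Fin n → Bool) → ℝ) (hp0 : ∀ v, 0 ≤ p v)
    (hps : ∑ v : Fin n → Bool, p v = 1) (i : Fin n) : margP p i ≤ 1 := by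
  rw [← hps]
  apply Finset.sum_le_sum
  intro v _
  by_cases h : v i <;> simp [h, hp0 v]

lemma le_margP (p : (Fin n → Bool) → ℝ) (hp0 : ∀ v, 0 ≤ p v) (i : Fin n)
    (v : Fin n → Bool) (hv : v i = true) : p v ≤ margP p i := by
  have := Finset.single_le_sum (f := fun w : Fin n → Bool => if w i then p w else 0)
    (fun w _ => by by_cases h : w i <;> simp [h, hp0 w]) (Finset.mem_univ v)
  simpa [hv, margP] using this

lemma le_margP_compl (p : (Fin n → Bool) → ℝ) (hp0 : ∀ v, 0 ≤ p v)
    (hps : ∑ v : Fin n → Bool, p v = 1) (i : Fin n)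
    (v : Fin n → Bool) (hv : v i = false) : p v ≤ 1 - margP p i := by
  rw [← margP_compl p hps i]
  have := Finset.single_le_sum (f := fun w : Fin n → Bool => if w i then 0 else p w)
    (fun w _ => by by_cases h : w i <;> simp [h, hp0 w]) (Finset.mem_univ v)
  simpa [hv] using this

lemma entropy_nonneg (p : (Fin n → Bool) → ℝ) (hp0 : ∀ v, 0 ≤ p v) (hp1 : ∀ v, p v ≤ 1) :
    0 ≤ -∑ v : Fin n → Bool, p v * Real.logb 2 (p v) := by
  rw [← Finset.sum_neg_distrib]
  apply Finset.sum_nonneg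
  intro v _
  have := Real.logb_nonpos (b := 2) one_lt_two (hp0 v) (hp1 v)
  nlinarith [hp0 v]

lemma subadd (p : (Fin n → Bool) → ℝ) (hp0 : ∀ v, 0 ≤ p v)
    (hps : ∑ v : Fin n → Bool, p v = 1) :
    (-∑ v : Fin n → Bool, p v * Real.logb 2 (p v)) ≤ ∑ i : Fin n, binEnt (margP p i) := by
  classical
  set P := margP p with hP
  set f : Fin n → Bool → ℝ := fun i b => if b then P i else 1 - P i with hf
  set r : (Fin n → Bool) → ℝ := fun v => ∏ i, f i (v i) with hr
  have hfnn : ∀ i b, 0 ≤ f i b := by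
    intro i b
    cases b
    · simpa [hf] using sub_nonneg.2 (margP_le_one p hp0 hps i)
    · simpa [hf] using margP_nonneg p hp0 i
  have hrnn : ∀ v, 0 ≤ r v := fun v => Finset.prod_nonneg (fun i _ => hfnn i (v i))
  have hr1 : ∑ v : Fin n → Bool, r v = 1 := by
    rw [hr, ← Fintype.prod_sum f]
    rw [Finset.prod_eq_one]
    intro i _
    simp [hf]
  have hfpos : ∀ v, 0 < p v → ∀ i : Fin n, 0 < f i (v i) := by
    intro v hv i
    cases hvi : v i
    · have := le_margP_compl p hp0 hps i v hvi
      simp only [hf, hvi]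
      simp only [Bool.false_eq_true, if_false]
      linarith
    · have := le_margP p hp0 i v hvi
      simp only [hf, hvi, if_true]
      linarith
  have hrpos : ∀ v, 0 < p v → 0 < r v := by
    intro v hv
    exact Finset.prod_pos (fun i _ => hfpos v hv i)
  have hL : (0:ℝ) < Real.log 2 := Real.log_pos one_lt_two
  -- Gibbs
  have gibbs : (-∑ v : Fin n → Bool, p v * Real.logb 2 (p v))
      ≤ -∑ v : Fin n → Bool, p v * Real.logb 2 (r v) := by
    have step : ∀ v : Fin n → Bool,
        p v * Real.logb 2 (r v) - p v * Real.logb 2 (p v) ≤ (r v - p v)/Real.log 2 := by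
      intro v
      rcases (hp0 v).eq_or_lt with h|h
      · rw [← h]
        simp only [zero_mul, sub_zero, sub_self, zero_sub, neg_zero]
        exact div_nonneg (hrnn v) hL.le
      · have hrv := hrpos v h
        have hlog := Real.log_le_sub_one_of_pos (div_pos hrv h)
        rw [Real.log_div (ne_of_gt hrv) (ne_of_gt h)] at hlog
        have h2 : p v * Real.log (r v) - p v * Real.log (p v) ≤ r v - p v := by
          have hm := mul_le_mul_of_nonneg_left hlog h.le
          have he : p v * (r v / p v - 1) = r v - p v := by field_simp
          nlinarith [hm, he]
        calc p v * Real.logb 2 (r v) - p v * Real.logb 2 (p v)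
            = (p v * Real.log (r v) - p v * Real.log (p v))/Real.log 2 := by
              rw [Real.logb, Real.logb]; ring
          _ ≤ (r v - p v)/Real.log 2 := by
              apply div_le_div_of_nonneg_right h2 hL.le
    have sum_step := Finset.sum_le_sum (fun v (_ : v ∈ Finset.univ) => step v)
    rw [Finset.sum_sub_distrib] at sum_step
    have hzero : ∑ v : Fin n → Bool, (r v - p v)/Real.log 2 = 0 := by
      rw [← Finset.sum_div, Finset.sum_sub_distrib, hr1, hps]
      simp
    rw [hzero] at sum_step
    linarith
  refine gibbs.trans (le_of_eq ?_)
  have per_v : ∀ v : Fin n → Bool,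
      p v * Real.logb 2 (r v) = ∑ i : Fin n, p v * Real.logb 2 (f i (v i)) := by
    intro v
    rcases (hp0 v).eq_or_lt with h|h
    · rw [← h]
      simp
    · rw [← Finset.mul_sum]
      congr 1
      exact Real.logb_prod _ _ (fun i _ => ne_of_gt (hfpos v h i))
  rw [Finset.sum_congr rfl (fun v _ => per_v v), Finset.sum_comm, ← Finset.sum_neg_distrib]
  apply Finset.sum_congr rfl
  intro i _
  have := sum_split p hps i (fun b => Real.logb 2 (f i b))
  rw [this]
  simp only [hf, if_true, Bool.false_eq_true, if_false]
  rw [binEnt]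
  ring
lemma key_bound (hn : 1 ≤ n) (p : (Fin n → Bool) → ℝ) (hp0 : ∀ v, 0 ≤ p v)
    (hp1 : ∀ v, p v ≤ 1) (hps : ∑ v : Fin n → Bool, p v = 1) :
    ∑ i : Fin n, (1 - 2 * margP p i)^2
      ≤ n * (1 - 2 * binEntInv ((-∑ v : Fin n → Bool, p v * Real.logb 2 (p v)) / n))^2 := by
  have hnpos : (0:ℝ) < n := by
    have : (1:ℝ) ≤ (n:ℝ) := by exact_mod_cast hn
    linarith
  set Hp := -∑ v : Fin n → Bool, p v * Real.logb 2 (p v) with hHp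
  have hHp0 : 0 ≤ Hp := entropy_nonneg p hp0 hp1
  set u : Fin n → ℝ := fun i => (1 - 2 * margP p i)^2 with hu
  have hu01 : ∀ i, u i ∈ Set.Icc (0:ℝ) 1 := by
    intro i
    have h0 := margP_nonneg p hp0 i
    have h1 := margP_le_one p hp0 hps i
    constructor
    · positivity
    · simp only [hu]
      nlinarith
  have hm_ui : ∀ i, binEnt (margP p i) = mFun (u i) := by
    intro i
    rw [mFun, hu]
    simp only
    rw [Real.sqrt_sq_eq_abs]
    rcases le_or_gt (margP p i) (1/2) with h|h
    · rw [abs_of_nonneg (by linarith)]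
      congr 1
      ring
    · rw [abs_of_neg (by linarith)]
      rw [show (1 - -(1 - 2 * margP p i))/2 = 1 - margP p i by ring]
      rw [binEnt_symm]
  set ub := ∑ i : Fin n, ((n:ℝ)⁻¹) • u i with hub
  have hub_sum : ub = (n:ℝ)⁻¹ * ∑ i : Fin n, u i := by
    rw [hub, Finset.mul_sum]
    simp [smul_eq_mul]
  have hub_mem : ub ∈ Set.Icc (0:ℝ) 1 := by
    constructor
    · rw [hub_sum]
      apply mul_nonneg (by positivity)
      exact Finset.sum_nonneg (fun i _ => (hu01 i).1)
    · rw [hub_sum]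
      have hle : ∑ i : Fin n, u i ≤ (n:ℝ) := by
        calc ∑ i : Fin n, u i ≤ ∑ _i : Fin n, (1:ℝ) := Finset.sum_le_sum (fun i _ => (hu01 i).2)
          _ = n := by simp
      calc (n:ℝ)⁻¹ * ∑ i : Fin n, u i ≤ (n:ℝ)⁻¹ * n := by
            apply mul_le_mul_of_nonneg_left hle (by positivity)
        _ = 1 := by field_simp
  have hjensen : ∑ i : Fin n, ((n:ℝ)⁻¹) • mFun (u i) ≤ mFun ub := by
    apply mFun_concave.le_map_sum
    · intro i _
      positivity
    · simp only [Finset.sum_const, Finset.card_univ, Fintype.card_fin, nsmul_eq_mul]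
      field_simp
    · intro i _
      exact hu01 i
  have hHle : Hp / (n:ℝ) ≤ mFun ub := by
    have h1 : Hp ≤ ∑ i : Fin n, mFun (u i) := by
      rw [← Finset.sum_congr rfl (fun i _ => hm_ui i)]
      exact subadd p hp0 hps
    have h2 : ∑ i : Fin n, ((n:ℝ)⁻¹) • mFun (u i) = (n:ℝ)⁻¹ * ∑ i : Fin n, mFun (u i) := by
      rw [Finset.mul_sum]
      simp [smul_eq_mul]
    calc Hp / (n:ℝ) = (n:ℝ)⁻¹ * Hp := by ring
      _ ≤ (n:ℝ)⁻¹ * ∑ i : Fin n, mFun (u i) := by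
          apply mul_le_mul_of_nonneg_left h1 (by positivity)
      _ = ∑ i : Fin n, ((n:ℝ)⁻¹) • mFun (u i) := h2.symm
      _ ≤ mFun ub := hjensen
  have hx₀ : (1 - Real.sqrt ub)/2 ∈ Set.Icc (0:ℝ) (1/2) := by
    have hs0 := Real.sqrt_nonneg ub
    have hs1 : Real.sqrt ub ≤ 1 := by
      rw [show (1:ℝ) = Real.sqrt 1 by simp]
      exact Real.sqrt_le_sqrt hub_mem.2
    constructor <;> [linarith; linarith]
  have ha : binEntInv (Hp / n) ≤ (1 - Real.sqrt ub)/2 := by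
    apply binEntInv_le (div_nonneg hHp0 hnpos.le) hx₀
    rw [mFun] at hHle
    exact hHle
  have h1 : Real.sqrt ub ≤ 1 - 2 * binEntInv (Hp / n) := by linarith
  have h2 : ub ≤ (1 - 2 * binEntInv (Hp / n))^2 := by
    have hsq : Real.sqrt ub ^ 2 = ub := Real.sq_sqrt hub_mem.1
    nlinarith [Real.sqrt_nonneg ub]
  have hsum : ∑ i : Fin n, u i = n * ub := by
    rw [hub_sum]
    field_simp
  rw [hu] at hsum
  rw [hsum]
  exact mul_le_mul_of_nonneg_left h2 hnpos.le

lemma exp_dist (p q : (Fin n → Bool) → ℝ)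
    (hps : ∑ v : Fin n → Bool, p v = 1) (hqs : ∑ w : Fin n → Bool, q w = 1) :
    ∑ v : Fin n → Bool, ∑ w : Fin n → Bool, p v * q w * (hammingDist v w : ℝ)
      = ∑ i : Fin n, (margP p i * (1 - margP q i) + (1 - margP p i) * margP q i) := by
  classical
  have hd : ∀ v w : Fin n → Bool, (hammingDist v w : ℝ)
      = ∑ i : Fin n, (if v i ≠ w i then (1:ℝ) else 0) := by
    intro v w
    rw [hammingDist, Finset.card_filter]
    push_cast
    apply Finset.sum_congr rfl
    intro i _
    by_cases h : v i ≠ w i <;> simp [h]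
  have step1 : ∀ v, ∑ w : Fin n → Bool, p v * q w * (hammingDist v w : ℝ)
      = ∑ i : Fin n, (p v * (if v i then 1 - margP q i else margP q i)) := by
    intro v
    have hterm : ∀ w, p v * q w * (hammingDist v w : ℝ)
        = ∑ i : Fin n, p v * (q w * (if v i ≠ w i then (1:ℝ) else 0)) := by
      intro w
      rw [hd v w, Finset.mul_sum]
      apply Finset.sum_congr rfl
      intro i _
      ring
    rw [Finset.sum_congr rfl (fun w _ => hterm w), Finset.sum_comm]
    apply Finset.sum_congr rfl
    intro i _
    rw [← Finset.mul_sum]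
    congr 1
    have hs : ∑ w : Fin n → Bool, q w * (if v i ≠ w i then (1:ℝ) else 0)
        = margP q i * (if v i ≠ true then (1:ℝ) else 0)
          + (1 - margP q i) * (if v i ≠ false then (1:ℝ) else 0) :=
      sum_split q hqs i (fun b => if v i ≠ b then (1:ℝ) else 0)
    rw [hs]
    by_cases h : v i <;> simp [h]
  rw [Finset.sum_congr rfl (fun v _ => step1 v), Finset.sum_comm]
  apply Finset.sum_congr rfl
  intro i _
  have hs2 : ∑ v : Fin n → Bool, p v * (if v i then 1 - margP q i else margP q i)
      = margP p i * (1 - margP q i) + (1 - margP p i) * margP q i := by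
    have := sum_split p hps i (fun b => if b then 1 - margP q i else margP q i)
    simpa using this
  exact hs2

end prob


/-- Lemma 1 (expected Hamming distance between independent samples,
bounded via entropies). -/
theorem stmt_15 (n : ℕ) (hn : 1 ≤ n) (p q : (Fin n → Bool) → ℝ)
    (hp0 : ∀ v, 0 ≤ p v) (hp1 : ∀ v, p v ≤ 1) (hps : ∑ v : Fin n → Bool, p v = 1)
    (hq0 : ∀ w, 0 ≤ q w) (hq1 : ∀ w, q w ≤ 1) (hqs : ∑ w : Fin n → Bool, q w = 1) :
    (n:ℝ) * pstar (binEntInv ((-∑ v : Fin n → Bool, p v * Real.logb 2 (p v)) / n))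
                  (binEntInv ((-∑ w : Fin n → Bool, q w * Real.logb 2 (q w)) / n))
      ≤ ∑ v : Fin n → Bool, ∑ w : Fin n → Bool, p v * q w * (hammingDist v w : ℝ) ∧
    ∑ v : Fin n → Bool, ∑ w : Fin n → Bool, p v * q w * (hammingDist v w : ℝ)
      ≤ (n:ℝ) * (1 - pstar (binEntInv ((-∑ v : Fin n → Bool, p v * Real.logb 2 (p v)) / n))
                           (binEntInv ((-∑ w : Fin n → Bool, q w * Real.logb 2 (q w)) / n))) := by
  classical
  have hnpos : (0:ℝ) < n := by
    have : (1:ℝ) ≤ (n:ℝ) := by exact_mod_cast hn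
    linarith
  set a := binEntInv ((-∑ v : Fin n → Bool, p v * Real.logb 2 (p v)) / n) with haDef
  set b := binEntInv ((-∑ w : Fin n → Bool, q w * Real.logb 2 (q w)) / n) with hbDef
  have ha_mem : a ∈ Set.Icc (0:ℝ) (1/2) :=
    binEntInv_mem (div_nonneg (entropy_nonneg p hp0 hp1) hnpos.le)
  have hb_mem : b ∈ Set.Icc (0:ℝ) (1/2) :=
    binEntInv_mem (div_nonneg (entropy_nonneg q hq0 hq1) hnpos.le)
  have ha2 : 0 ≤ 1 - 2*a := by have := ha_mem.2; linarith
  have hb2 : 0 ≤ 1 - 2*b := by have := hb_mem.2; linarith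
  have hkp := key_bound hn p hp0 hp1 hps
  have hkq := key_bound hn q hq0 hq1 hqs
  rw [← haDef] at hkp
  rw [← hbDef] at hkq
  have hEd := exp_dist p q hps hqs
  set A := ∑ i : Fin n, (1 - 2*margP p i) * (1 - 2*margP q i) with hA
  have hE' : ∑ i : Fin n, (margP p i * (1 - margP q i) + (1 - margP p i) * margP q i)
      = (n:ℝ)/2 - A/2 := by
    have : ∀ i : Fin n, margP p i * (1 - margP q i) + (1 - margP p i) * margP q i
        = 1/2 - ((1 - 2*margP p i) * (1 - 2*margP q i))/2 := by
      intro i; ring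
    have hconst : (∑ _i : Fin n, (1/2:ℝ)) = (n:ℝ)/2 := by
      simp only [Finset.sum_const, Finset.card_univ, Fintype.card_fin, nsmul_eq_mul]
      ring
    calc ∑ i : Fin n, (margP p i * (1 - margP q i) + (1 - margP p i) * margP q i)
        = ∑ i : Fin n, ((1/2:ℝ) - ((1 - 2*margP p i) * (1 - 2*margP q i))/2) :=
          Finset.sum_congr rfl (fun i _ => this i)
      _ = (∑ _i : Fin n, (1/2:ℝ))
            - (∑ i : Fin n, (1 - 2*margP p i) * (1 - 2*margP q i))/2 := by
          rw [Finset.sum_sub_distrib, Finset.sum_div]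
      _ = (n:ℝ)/2 - A/2 := by rw [hconst, hA]
  -- Cauchy-Schwarz bound on |A|
  have habs : |A| ≤ (n:ℝ) * ((1 - 2*a) * (1 - 2*b)) := by
    have h1 : |A| ≤ ∑ i : Fin n, |1 - 2*margP p i| * |1 - 2*margP q i| := by
      rw [hA]
      calc |∑ i : Fin n, (1 - 2*margP p i) * (1 - 2*margP q i)|
          ≤ ∑ i : Fin n, |(1 - 2*margP p i) * (1 - 2*margP q i)| :=
            Finset.abs_sum_le_sum_abs _ _
        _ = ∑ i : Fin n, |1 - 2*margP p i| * |1 - 2*margP q i| := by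
            apply Finset.sum_congr rfl
            intro i _
            exact abs_mul _ _
    have hcs : (∑ i : Fin n, |1 - 2*margP p i| * |1 - 2*margP q i|)^2
        ≤ (∑ i : Fin n, (1 - 2*margP p i)^2) * (∑ i : Fin n, (1 - 2*margP q i)^2) := by
      have := Finset.sum_mul_sq_le_sq_mul_sq Finset.univ
        (fun i => |1 - 2*margP p i|) (fun i => |1 - 2*margP q i|)
      simpa [sq_abs] using this
    have hS1nn : 0 ≤ ∑ i : Fin n, |1 - 2*margP p i| * |1 - 2*margP q i| :=
      Finset.sum_nonneg (fun i _ => mul_nonneg (abs_nonneg _) (abs_nonneg _))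
    have h2 : ∑ i : Fin n, |1 - 2*margP p i| * |1 - 2*margP q i|
        ≤ Real.sqrt (((n:ℝ) * (1 - 2*a)^2) * ((n:ℝ) * (1 - 2*b)^2)) := by
      rw [show (∑ i : Fin n, |1 - 2*margP p i| * |1 - 2*margP q i|)
          = Real.sqrt ((∑ i : Fin n, |1 - 2*margP p i| * |1 - 2*margP q i|)^2) from
          (Real.sqrt_sq hS1nn).symm]
      apply Real.sqrt_le_sqrt
      calc (∑ i : Fin n, |1 - 2*margP p i| * |1 - 2*margP q i|)^2
          ≤ (∑ i : Fin n, (1 - 2*margP p i)^2) * (∑ i : Fin n, (1 - 2*margP q i)^2) := hcs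
        _ ≤ ((n:ℝ) * (1 - 2*a)^2) * ((n:ℝ) * (1 - 2*b)^2) := by
            apply mul_le_mul hkp hkq (Finset.sum_nonneg (fun i _ => sq_nonneg _))
            positivity
    have h3 : Real.sqrt (((n:ℝ) * (1 - 2*a)^2) * ((n:ℝ) * (1 - 2*b)^2))
        = (n:ℝ) * ((1 - 2*a) * (1 - 2*b)) := by
      rw [show ((n:ℝ) * (1 - 2*a)^2) * ((n:ℝ) * (1 - 2*b)^2)
          = ((n:ℝ) * ((1 - 2*a) * (1 - 2*b)))^2 by ring]
      exact Real.sqrt_sq (by positivity)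
    calc |A| ≤ ∑ i : Fin n, |1 - 2*margP p i| * |1 - 2*margP q i| := h1
      _ ≤ Real.sqrt (((n:ℝ) * (1 - 2*a)^2) * ((n:ℝ) * (1 - 2*b)^2)) := h2
      _ = (n:ℝ) * ((1 - 2*a) * (1 - 2*b)) := h3
  obtain ⟨hA1, hA2⟩ := abs_le.1 habs
  have e1 : (n:ℝ) * pstar a b = (n:ℝ)/2 - ((n:ℝ) * ((1 - 2*a) * (1 - 2*b)))/2 := by
    rw [pstar]; ring
  have e2 : (n:ℝ) * (1 - pstar a b) = (n:ℝ)/2 + ((n:ℝ) * ((1 - 2*a) * (1 - 2*b)))/2 := by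
    rw [pstar]; ring
  constructor
  · rw [hEd, hE', e1]
    linarith
  · rw [hEd, hE', e2]
    linarith
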